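/- If X is an invertible n×n complex cross matrix, then its inverse X⁻¹ is also a cross matrix. -/
import Mathlib

/-- An `n × n` complex matrix is a *cross matrix* if its nonzero entries lie
only on the main diagonal and the anti-diagonal (0-based indices). -/
def IsCrossMatrix {n : ℕ} (X : Matrix (Fin n) (Fin n) ℂ) : Prop :=
  ∀ i j : Fin n, j ≠ i → (i : ℕ) + (j : ℕ) + 1 ≠ n → X i j = 0

/-- Cross matrices form a subalgebra. -/
def crossSubalgebra (n : ℕ) : Subalgebra ℂ (Matrix (Fin n) (Fin n) ℂ) where
  carrier := {X | IsCrossMatrix X}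
  add_mem' {X Y} hX hY := fun i j hji hn => by
    simp [Matrix.add_apply, hX i j hji hn, hY i j hji hn]
  mul_mem' {X Y} hX hY := fun i j hji hn => by
    rw [Matrix.mul_apply]
    apply Finset.sum_eq_zero
    intro k _
    rcases eq_or_ne k i with rfl | hki
    · rw [hY k j hji hn, mul_zero]
    rcases eq_or_ne ((i : ℕ) + (k : ℕ) + 1) n with hik | hik
    · have hjk : j ≠ k := by
        rintro rfl; exact hn hik
      have hkj : (k : ℕ) + (j : ℕ) + 1 ≠ n := by
        intro hh
        apply hji
        have : (i : ℕ) = (j : ℕ) := by omega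
        exact Fin.ext this.symm
      rw [hY k j hjk hkj, mul_zero]
    · rw [hX i k hki hik, zero_mul]
  algebraMap_mem' := fun c i j hji hn => by
    simp [Matrix.algebraMap_matrix_apply, hji.symm]

/-- The inverse of an invertible cross matrix is again a cross matrix. -/
theorem crossMatrix_inv {n : ℕ}
    (X : Matrix (Fin n) (Fin n) ℂ) (hX : IsCrossMatrix X) (h : IsUnit X) :
    IsCrossMatrix X⁻¹ := by
  set S := crossSubalgebra n
  have hXS : X ∈ S := hX
  -- left multiplication by X on S
  let x : S := ⟨X, hXS⟩
  let f : S →ₗ[ℂ] S :=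
    { toFun := fun y => x * y
      map_add' := fun a b => by simp [mul_add]
      map_smul' := fun c a => by simp [mul_smul_comm] }
  have hinj : Function.Injective f := by
    intro a b hab
    have : X * (a : Matrix (Fin n) (Fin n) ℂ) = X * b := congrArg Subtype.val hab
    exact Subtype.ext (h.mul_left_cancel this)
  have hsurj : Function.Surjective f :=
    (LinearMap.injective_iff_surjective (f := f)).mp hinj
  obtain ⟨y, hy⟩ := hsurj 1
  have hy' : X * (y : Matrix (Fin n) (Fin n) ℂ) = 1 := congrArg Subtype.val hy
  have : X⁻¹ = (y : Matrix (Fin n) (Fin n) ℂ) := Matrix.inv_eq_right_inv hy'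
  rw [this]
  exact y.2
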